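/- For λ ≥ 2 and m = k−j−1 even with m > 2, the internal nodes of a 2-path L(j,k) can be influenced within λ rounds at total internal cost k−j−2 via the incentive pattern 01(20)*, provided both endpoints j and k are influenced sufficiently early (endpoint j by round λ−1 and k by round λ−1). -/

import Mathlib

open Finset

/-- Path adjacency on ℕ: `u` and `v` are consecutive. -/
def pAdj (u v : ℕ) : Prop := u + 1 = v ∨ v + 1 = u

instance : DecidableRel pAdj := fun u v => by unfold pAdj; infer_instance

/-- Influence process on the node set `S` of a path, thresholds `t`, incentives `p`:
at round 0 exactly the nodes with `p v = t v` are influenced; afterwards a node is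
influenced once the number of already influenced neighbours reaches `t v - p v`. -/
def infl (S : Finset ℕ) (t p : ℕ → ℕ) : ℕ → Finset ℕ
  | 0 => S.filter fun v => p v = t v
  | ℓ + 1 => infl S t p ℓ ∪ S.filter fun v =>
      t v - p v ≤ ((infl S t p ℓ).filter fun u => pAdj u v).card

lemma infl_mono (S : Finset ℕ) (t p : ℕ → ℕ) {a b : ℕ} (h : a ≤ b) :
    infl S t p a ⊆ infl S t p b := by
  induction b with
  | zero =>
    have : a = 0 := Nat.le_zero.mp h
    subst this; exact subset_rfl
  | succ b ih =>
    rcases Nat.lt_or_ge a (b + 1) with h' | h'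
    · exact (ih (Nat.lt_succ_iff.mp h')).trans subset_union_left
    · have : a = b + 1 := le_antisymm h h'
      subst this; exact subset_rfl

lemma infl_step {S : Finset ℕ} {t p : ℕ → ℕ} {ℓ v : ℕ}
    (hv : v ∈ S)
    (h : t v - p v ≤ ((infl S t p ℓ).filter fun u => pAdj u v).card) :
    v ∈ infl S t p (ℓ + 1) := by
  rw [infl]
  exact mem_union_right _ (mem_filter.mpr ⟨hv, h⟩)

lemma one_le_card_filter {s : Finset ℕ} {v a : ℕ}
    (ha : a ∈ s) (hav : pAdj a v) :
    1 ≤ (s.filter fun u => pAdj u v).card :=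
  card_pos.mpr ⟨a, mem_filter.mpr ⟨ha, hav⟩⟩

lemma two_le_card_filter {s : Finset ℕ} {v a b : ℕ} (hab : a ≠ b)
    (ha : a ∈ s) (hb : b ∈ s) (hav : pAdj a v) (hbv : pAdj b v) :
    2 ≤ (s.filter fun u => pAdj u v).card := by
  have hsub : ({a, b} : Finset ℕ) ⊆ s.filter fun u => pAdj u v := by
    intro x hx
    rcases mem_insert.mp hx with rfl | hx
    · exact mem_filter.mpr ⟨ha, hav⟩
    · rcases mem_singleton.mp hx with rfl
      exact mem_filter.mpr ⟨hb, hbv⟩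
  calc 2 = ({a, b} : Finset ℕ).card := (card_pair hab).symm
    _ ≤ _ := card_le_card hsub

/-- The incentive pattern as a function of the offset minus one. -/
def gpat (d : ℕ) : ℕ :=
  if d = 0 then 0 else if d = 1 then 1 else if d % 2 = 0 then 2 else 0

lemma gpat_sum (c : ℕ) : ∑ d ∈ range (2 * c + 4), gpat d = 2 * c + 3 := by
  induction c with
  | zero => simp [gpat, Finset.sum_range_succ]
  | succ c ih =>
    have h : 2 * (c + 1) + 4 = (2 * c + 4) + 1 + 1 := by ring
    rw [h, Finset.sum_range_succ, Finset.sum_range_succ, ih]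
    have h1 : gpat (2 * c + 4) = 2 := by
      unfold gpat
      rw [if_neg (by omega), if_neg (by omega), if_pos (by omega)]
    have h2 : gpat (2 * c + 4 + 1) = 0 := by unfold gpat; split_ifs <;> omega
    rw [h1, h2]; ring

/-- for `lam ≥ 2` and `m = k-j-1` even with `m > 2`, the incentive
pattern `01(20)*` on the internal nodes of a 2-path `L(j,k)` has internal cost
`k-j-2` and influences all internal nodes within `lam` rounds, provided both
endpoints `j` and `k` are influenced by round `lam - 1`. -/
theorem two_path_even_pattern (n lam j k : ℕ) (t p : ℕ → ℕ)
    (hlam : 2 ≤ lam) (hkn : k < n)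
    (htj : t j = 1) (htk : t k = 1) (htint : ∀ i, j < i → i < k → t i = 2)
    (heven : Even (k - j - 1)) (hm : 2 < k - j - 1)
    (hpat : ∀ i, j < i → i < k →
      p i = if i = j + 1 then 0 else if i = j + 2 then 1
            else if (i - j) % 2 = 1 then 2 else 0)
    (hj : j ∈ infl (range n) t p (lam - 1))
    (hk : k ∈ infl (range n) t p (lam - 1)) :
    (∀ i ∈ Ioo j k, i ∈ infl (range n) t p lam) ∧
    ∑ i ∈ Ioo j k, p i = k - j - 2 := by
  obtain ⟨c0, hc0⟩ := heven
  have hk5 : j + 5 ≤ k := by omega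
  -- odd-offset internal nodes (offset ≥ 3) are influenced at round 0
  have h0 : ∀ i, j + 3 ≤ i → i < k → (i - j) % 2 = 1 →
      i ∈ infl (range n) t p 0 := by
    intro i hi1 hi2 hi3
    rw [infl]
    refine mem_filter.mpr ⟨mem_range.mpr (by omega), ?_⟩
    rw [hpat i (by omega) hi2, htint i (by omega) hi2]
    split_ifs <;> omega
  -- even-offset internal nodes (offset ≥ 4, not the last) influenced at round 1
  have h1even : ∀ i, j + 4 ≤ i → i + 1 < k → (i - j) % 2 = 0 →
      i ∈ infl (range n) t p 1 := by
    intro i hi1 hi2 hi3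
    apply infl_step (mem_range.mpr (by omega))
    rw [hpat i (by omega) (by omega), htint i (by omega) (by omega)]
    have ha : i - 1 ∈ infl (range n) t p 0 := h0 (i - 1) (by omega) (by omega) (by omega)
    have hb : i + 1 ∈ infl (range n) t p 0 := h0 (i + 1) (by omega) (by omega) (by omega)
    have h2 : 2 ≤ ((infl (range n) t p 0).filter fun u => pAdj u i).card :=
      two_le_card_filter (by omega) ha hb (Or.inl (by omega)) (Or.inr rfl)
    split_ifs <;> omega
  -- node j+2 influenced at round 1
  have hj2 : j + 2 ∈ infl (range n) t p 1 := by
    apply infl_step (mem_range.mpr (by omega))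
    rw [hpat (j + 2) (by omega) (by omega), htint (j + 2) (by omega) (by omega)]
    have ha : j + 3 ∈ infl (range n) t p 0 := h0 (j + 3) (by omega) (by omega) (by omega)
    have h1 : 1 ≤ ((infl (range n) t p 0).filter fun u => pAdj u (j + 2)).card :=
      one_le_card_filter ha (Or.inr rfl)
    split_ifs <;> omega
  have hlam1 : lam - 1 + 1 = lam := by omega
  -- node j+1 influenced at round lam
  have hj1 : j + 1 ∈ infl (range n) t p lam := by
    rw [← hlam1]
    apply infl_step (mem_range.mpr (by omega))
    rw [hpat (j + 1) (by omega) (by omega), htint (j + 1) (by omega) (by omega)]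
    have hb : j + 2 ∈ infl (range n) t p (lam - 1) :=
      infl_mono _ _ _ (by omega) hj2
    have h2 : 2 ≤ ((infl (range n) t p (lam - 1)).filter fun u => pAdj u (j + 1)).card :=
      two_le_card_filter (by omega) hj hb (Or.inl rfl) (Or.inr rfl)
    split_ifs <;> omega
  -- node k-1 influenced at round lam
  have hk1 : k - 1 ∈ infl (range n) t p lam := by
    rw [← hlam1]
    apply infl_step (mem_range.mpr (by omega))
    rw [hpat (k - 1) (by omega) (by omega), htint (k - 1) (by omega) (by omega)]
    have ha : k - 2 ∈ infl (range n) t p (lam - 1) :=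
      infl_mono _ _ _ (by omega) (h0 (k - 2) (by omega) (by omega) (by omega))
    have h2 : 2 ≤ ((infl (range n) t p (lam - 1)).filter fun u => pAdj u (k - 1)).card :=
      two_le_card_filter (by omega) ha hk (Or.inl (by omega)) (Or.inr (by omega))
    split_ifs <;> omega
  constructor
  · intro i hi
    rw [mem_Ioo] at hi
    by_cases hij1 : i = j + 1
    · subst hij1; exact hj1
    by_cases hik1 : i = k - 1
    · subst hik1; exact hk1
    by_cases hodd : (i - j) % 2 = 1
    · exact infl_mono _ _ _ (by omega) (h0 i (by omega) hi.2 hodd)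
    by_cases hij2 : i = j + 2
    · subst hij2; exact infl_mono _ _ _ (by omega) hj2
    · exact infl_mono _ _ _ (by omega)
        (h1even i (by omega) (by omega) (by omega))
  · rw [← Finset.Ico_add_one_left_eq_Ioo, Finset.sum_Ico_eq_sum_range]
    have hterm : ∀ d ∈ range (k - (j + 1)), p (j + 1 + d) = gpat d := by
      intro d hd
      rw [mem_range] at hd
      rw [hpat (j + 1 + d) (by omega) (by omega)]
      unfold gpat
      split_ifs <;> omega
    rw [Finset.sum_congr rfl hterm]
    have hmk : k - (j + 1) = 2 * (c0 - 2) + 4 := by omega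
    rw [hmk, gpat_sum]
    omega
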